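/- For A with 0 < A^2 <= 0.9, one has (1/A) ∫_0^A e^{-t^2/2} dt, when squared and estimated by polar coordinates over the quarter disk, satisfies ((1/A)∫_0^A e^{-t^2/2} dt)^2 <= 1 - A^2/4. -/
import Mathlib

lemma exp_neg_le_poly (y : ℝ) (hy : 0 ≤ y) :
    Real.exp (-y) ≤ 1 - y + y ^ 2 / 2 := by
  have h := Real.quadratic_le_exp_of_nonneg hy
  have hpos : (0:ℝ) < 1 + y + y ^ 2 / 2 := by nlinarith
  have hexp : 0 < Real.exp y := Real.exp_pos y
  rw [Real.exp_neg]
  have h1 : (Real.exp y)⁻¹ ≤ (1 + y + y ^ 2 / 2)⁻¹ := by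
    apply inv_anti₀ hpos h
  refine h1.trans ?_
  rw [inv_le_iff_one_le_mul₀ hpos]
  nlinarith [sq_nonneg (y^2)]

/-- for `0 < A` with `A² ≤ 0.9`,
`((1/A) ∫_0^A e^{-t²/2} dt)² ≤ 1 - A²/4`. -/
theorem gauss_integral_avg_sq_le (A : ℝ) (hA : 0 < A) (hA2 : A ^ 2 ≤ 9 / 10) :
    ((1 / A) * ∫ t in (0:ℝ)..A, Real.exp (-t ^ 2 / 2)) ^ 2 ≤ 1 - A ^ 2 / 4 := by
  set I := ∫ t in (0:ℝ)..A, Real.exp (-t ^ 2 / 2) with hI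
  have hc1 : Continuous fun t : ℝ => Real.exp (-t ^ 2 / 2) := by continuity
  have hc2 : Continuous fun t : ℝ => 1 - t ^ 2 / 2 + t ^ 4 / 8 := by continuity
  have hIle : I ≤ ∫ t in (0:ℝ)..A, (1 - t ^ 2 / 2 + t ^ 4 / 8) := by
    apply intervalIntegral.integral_mono_on hA.le
      (hc1.intervalIntegrable _ _) (hc2.intervalIntegrable _ _)
    intro t ht
    have h := exp_neg_le_poly (t ^ 2 / 2) (by positivity)
    have : -t ^ 2 / 2 = -(t ^ 2 / 2) := by ring
    rw [this]
    refine h.trans_eq ?_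
    ring
  have hpoly : (∫ t in (0:ℝ)..A, (1 - t ^ 2 / 2 + t ^ 4 / 8))
      = A - A ^ 3 / 6 + A ^ 5 / 40 := by
    have h1 : IntervalIntegrable (fun t : ℝ => 1 - t ^ 2 / 2) MeasureTheory.volume 0 A :=
      (by continuity : Continuous fun t : ℝ => 1 - t ^ 2 / 2).intervalIntegrable _ _
    have h2 : IntervalIntegrable (fun t : ℝ => t ^ 4 / 8) MeasureTheory.volume 0 A :=
      (by continuity : Continuous fun t : ℝ => t ^ 4 / 8).intervalIntegrable _ _
    rw [intervalIntegral.integral_add h1 h2]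
    have h3 : IntervalIntegrable (fun _ : ℝ => (1:ℝ)) MeasureTheory.volume 0 A :=
      intervalIntegrable_const
    have h4 : IntervalIntegrable (fun t : ℝ => t ^ 2 / 2) MeasureTheory.volume 0 A :=
      (by continuity : Continuous fun t : ℝ => t ^ 2 / 2).intervalIntegrable _ _
    rw [intervalIntegral.integral_sub h3 h4]
    simp [intervalIntegral.integral_div, integral_pow]
    ring
  have hInonneg : 0 ≤ I := by
    apply intervalIntegral.integral_nonneg hA.le
    intro t _
    positivity
  have hbound : (1 / A) * I ≤ 1 - A ^ 2 / 6 + A ^ 4 / 40 := by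
    have : I ≤ A - A ^ 3 / 6 + A ^ 5 / 40 := hIle.trans_eq hpoly
    rw [one_div, inv_mul_le_iff₀ hA]
    calc I ≤ A - A ^ 3 / 6 + A ^ 5 / 40 := this
    _ = A * (1 - A ^ 2 / 6 + A ^ 4 / 40) := by ring
  have hnn : 0 ≤ (1 / A) * I := by positivity
  have hsq : ((1 / A) * I) ^ 2 ≤ (1 - A ^ 2 / 6 + A ^ 4 / 40) ^ 2 := by
    apply pow_le_pow_left₀ hnn hbound
  refine hsq.trans ?_
  nlinarith [sq_nonneg A, sq_nonneg (A^2), pow_pos hA 2, pow_nonneg hA.le 6, pow_nonneg hA.le 8]
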